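/- arXiv:1105.0605 — 4 statements merged into one kernel-verified Lean document; each statement's English description precedes it below -/
import Mathlib

section
/- Let (A_n)_{n≥0} be a sequence of matrices in GL(2,ℂ) with products A⁽ⁿ⁾ = A_{n−1}⋯A_1A_0, and define g(n,[v]) = |det A⁽ⁿ⁾|/‖A⁽ⁿ⁾v‖² for unit vectors v ∈ ℂ². Suppose there exist C > 0 and λ > 1 and two unit vectors u₁, u₂ spanning distinct complex lines such that g(n,[u_i]) ≥ Cλⁿ for all n ≥ 0 and i = 1,2. Then a contradiction follows; i.e., there can be at most one projective direction ξ with g(n,ξ) ≥ Cλⁿ for all n ≥ 0. -/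
noncomputable def toE (v : Fin 2 → ℂ) : EuclideanSpace ℂ (Fin 2) := WithLp.toLp 2 v

/-- Products of the sequence of matrices: `A⁽ⁿ⁾ = A_{n−1} ⋯ A_1 A_0`. -/
noncomputable def prodSeq (A : ℕ → Matrix (Fin 2) (Fin 2) ℂ) : ℕ → Matrix (Fin 2) (Fin 2) ℂ
  | 0 => 1
  | n + 1 => A n * prodSeq A n

lemma normE_sq (v : Fin 2 → ℂ) : ‖toE v‖ ^ 2 = ‖v 0‖ ^ 2 + ‖v 1‖ ^ 2 := by
  rw [EuclideanSpace.norm_eq, Real.sq_sqrt (by positivity)]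
  simp [Fin.sum_univ_two, toE]

lemma area_bound (M : Matrix (Fin 2) (Fin 2) ℂ) (u₁ u₂ : Fin 2 → ℂ) :
    ‖M.det‖ * ‖u₁ 0 * u₂ 1 - u₁ 1 * u₂ 0‖ ≤
      ‖toE (M.mulVec u₁)‖ * ‖toE (M.mulVec u₂)‖ := by
  set v := M.mulVec u₁ with hv
  set w := M.mulVec u₂ with hw
  have key : M.det * (u₁ 0 * u₂ 1 - u₁ 1 * u₂ 0) = v 0 * w 1 - v 1 * w 0 := by
    simp only [hv, hw, Matrix.mulVec, dotProduct, Fin.sum_univ_two,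
      Matrix.det_fin_two]
    ring
  have h1 : ‖M.det‖ * ‖u₁ 0 * u₂ 1 - u₁ 1 * u₂ 0‖ = ‖v 0 * w 1 - v 1 * w 0‖ := by
    rw [← norm_mul, key]
  rw [h1]
  have h2 : ‖v 0 * w 1 - v 1 * w 0‖ ≤ ‖v 0‖ * ‖w 1‖ + ‖v 1‖ * ‖w 0‖ := by
    calc ‖v 0 * w 1 - v 1 * w 0‖ ≤ ‖v 0 * w 1‖ + ‖v 1 * w 0‖ := norm_sub_le _ _
    _ = ‖v 0‖ * ‖w 1‖ + ‖v 1‖ * ‖w 0‖ := by rw [norm_mul, norm_mul]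
  refine h2.trans ?_
  have hvn := normE_sq v
  have hwn := normE_sq w
  have hV : (0:ℝ) ≤ ‖toE v‖ := norm_nonneg _
  have hW : (0:ℝ) ≤ ‖toE w‖ := norm_nonneg _
  nlinarith [sq_nonneg (‖v 0‖ * ‖w 0‖ - ‖v 1‖ * ‖w 1‖), norm_nonneg (v 0),
    norm_nonneg (v 1), norm_nonneg (w 0), norm_nonneg (w 1),
    sq_nonneg (‖v 0‖ * ‖w 1‖ + ‖v 1‖ * ‖w 0‖ - ‖toE v‖ * ‖toE w‖),
    mul_nonneg hV hW]

/-- If `(A_n)` are invertible matrices with products `A⁽ⁿ⁾`, and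
`g(n,[v]) = |det A⁽ⁿ⁾|/‖A⁽ⁿ⁾v‖²`, then there cannot exist `C > 0`, `λ > 1` and two
unit vectors `u₁, u₂` spanning distinct complex lines with `g(n,[u_i]) ≥ Cλⁿ` for all
`n ≥ 0` and `i = 1,2`. -/
theorem unique_expanded_direction (A : ℕ → Matrix (Fin 2) (Fin 2) ℂ)
    (hA : ∀ n, (A n).det ≠ 0) (C lam : ℝ) (hC : 0 < C) (hlam : 1 < lam)
    (u₁ u₂ : EuclideanSpace ℂ (Fin 2)) (hu₁ : ‖u₁‖ = 1) (hu₂ : ‖u₂‖ = 1)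
    (hlines : ¬ ∃ c : ℂ, u₂ = c • u₁)
    (hg₁ : ∀ n : ℕ, ‖(prodSeq A n).det‖ / ‖toE ((prodSeq A n).mulVec u₁)‖ ^ 2 ≥ C * lam ^ n)
    (hg₂ : ∀ n : ℕ, ‖(prodSeq A n).det‖ / ‖toE ((prodSeq A n).mulVec u₂)‖ ^ 2 ≥ C * lam ^ n) :
    False := by
  set D : ℂ := u₁ 0 * u₂ 1 - u₁ 1 * u₂ 0 with hDdef
  -- D ≠ 0 since the lines are distinct
  have hD : D ≠ 0 := by
    intro h0
    apply hlines
    have hu1ne : u₁ ≠ 0 := fun h => by simp [h] at hu₁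
    have hcase : u₁ 0 ≠ 0 ∨ u₁ 1 ≠ 0 := by
      by_contra hc
      push_neg at hc
      apply hu1ne
      ext i
      fin_cases i <;> simp [hc.1, hc.2]
    have heq : u₁ 0 * u₂ 1 = u₁ 1 * u₂ 0 := by
      have := sub_eq_zero.mp h0
      linear_combination this
    rcases hcase with h1 | h1
    · refine ⟨u₂ 0 / u₁ 0, ?_⟩
      ext i
      fin_cases i
      · show u₂ 0 = u₂ 0 / u₁ 0 * u₁ 0
        field_simp
      · show u₂ 1 = u₂ 0 / u₁ 0 * u₁ 1
        field_simp
        linear_combination heq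
    · refine ⟨u₂ 1 / u₁ 1, ?_⟩
      ext i
      fin_cases i
      · show u₂ 0 = u₂ 1 / u₁ 1 * u₁ 0
        field_simp
        linear_combination -heq
      · show u₂ 1 = u₂ 1 / u₁ 1 * u₁ 1
        field_simp
  have hDn : (0:ℝ) < ‖D‖ := norm_pos_iff.mpr hD
  have key : ∀ n : ℕ, C * lam ^ n * ‖D‖ ≤ 1 := by
    intro n
    set M := prodSeq A n with hM
    set a := ‖toE (M.mulVec u₁)‖ with ha
    set b := ‖toE (M.mulVec u₂)‖ with hb
    set d := ‖M.det‖ with hd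
    set s := C * lam ^ n with hs
    have hspos : 0 < s := by positivity
    have h1 : s ≤ d / a ^ 2 := hg₁ n
    have h2 : s ≤ d / b ^ 2 := hg₂ n
    have hapos : 0 < a := by
      by_contra h
      push_neg at h
      have ha0 : a = 0 := le_antisymm h (norm_nonneg _)
      rw [ha0] at h1
      simp only [ne_eq, OfNat.ofNat_ne_zero, not_false_eq_true, zero_pow, div_zero] at h1
      linarith
    have hbpos : 0 < b := by
      by_contra h
      push_neg at h
      have hb0 : b = 0 := le_antisymm h (norm_nonneg _)
      rw [hb0] at h2
      simp only [ne_eq, OfNat.ofNat_ne_zero, not_false_eq_true, zero_pow, div_zero] at h2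
      linarith
    have h1' : s * a ^ 2 ≤ d := by
      rw [le_div_iff₀ (by positivity)] at h1
      exact h1
    have h2' : s * b ^ 2 ≤ d := by
      rw [le_div_iff₀ (by positivity)] at h2
      exact h2
    have hdpos : 0 < d := lt_of_lt_of_le (by positivity) h1'
    have hab : d * ‖D‖ ≤ a * b := area_bound M u₁ u₂
    have h3 : s * (d * ‖D‖) ≤ s * (a * b) :=
      mul_le_mul_of_nonneg_left hab hspos.le
    have e1 : (s * (d * ‖D‖)) ^ 2 ≤ (s * (a * b)) ^ 2 :=
      pow_le_pow_left₀ (by positivity) h3 2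
    have e2 : (s * (a * b)) ^ 2 ≤ d ^ 2 := by
      have h4 : (s * a ^ 2) * (s * b ^ 2) ≤ d * d :=
        mul_le_mul h1' h2' (by positivity) hdpos.le
      calc (s * (a * b)) ^ 2 = (s * a ^ 2) * (s * b ^ 2) := by ring
      _ ≤ d * d := h4
      _ = d ^ 2 := by ring
    have hsq : (s * ‖D‖) ^ 2 * d ^ 2 ≤ 1 * d ^ 2 := by
      calc (s * ‖D‖) ^ 2 * d ^ 2 = (s * (d * ‖D‖)) ^ 2 := by ring
      _ ≤ (s * (a * b)) ^ 2 := e1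
      _ ≤ d ^ 2 := e2
      _ = 1 * d ^ 2 := by ring
    have hfin : (s * ‖D‖) ^ 2 ≤ 1 :=
      le_of_mul_le_mul_right hsq (by positivity)
    exact le_of_pow_le_pow_left₀ two_ne_zero zero_le_one (by rw [one_pow]; exact hfin)
  obtain ⟨n, hn⟩ := pow_unbounded_of_one_lt (1 / (C * ‖D‖)) hlam
  have hkn := key n
  have hcd : 0 < C * ‖D‖ := by positivity
  rw [div_lt_iff₀ hcd] at hn
  nlinarith [hkn, hn, pow_pos (lt_trans one_pos hlam) n]
end

section
/- (Pliss Lemma, hyperbolic-times corollary) Given 0 < γ₁ < γ₀ and a > 1, there exist N₀ ∈ ℕ and δ₀ > 0 such that: for every finite sequence (a_l)_{l=0}^{n−1} of reals with n > N₀, a⁻¹ < a_l < a for all l, and ∏_{l=0}^{n−1} a_l ≥ γ₀ⁿ, the set Ht = { 0 ≤ k < n : ∀ s with k < s < n, ∏_{l=k+1}^{s} a_l ≥ γ₁^{s−k} } has cardinality at least n·δ₀. -/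
open scoped Classical

private lemma pliss_count (n : ℕ) (S : ℕ → ℝ) (A : ℝ)
    (hstep : ∀ m < n, S (m + 1) - S m ≤ A) :
    S n - S 0 ≤ A * ((Finset.range n).filter
      (fun k => ∀ j, k < j → j ≤ n → S k ≤ S j)).card := by
  have key : ∀ d, d ≤ n →
      ∀ (h : (Finset.Icc (n - d) n).Nonempty),
      S n - (Finset.Icc (n - d) n).inf' h S ≤
        A * ((Finset.Ico (n - d) n).filter
          (fun k => ∀ j, k < j → j ≤ n → S k ≤ S j)).card := by
    intro d
    induction d with
    | zero =>
      intro _ h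
      simp
    | succ d ih =>
      intro hd h
      set m := n - (d + 1) with hm
      have hm1 : n - d = m + 1 := by omega
      have hmlt : m < n := by omega
      have hne : (Finset.Icc (m + 1) n).Nonempty := Finset.nonempty_Icc.mpr (by omega)
      have ihm := ih (by omega)
      rw [hm1] at ihm
      have ihm := ihm hne
      have hτ1S : (Finset.Icc (m + 1) n).inf' hne S ≤ S (m + 1) :=
        Finset.inf'_le S (by simp [Finset.mem_Icc]; omega)
      have hico : Finset.Ico m n = insert m (Finset.Ico (m + 1) n) := by
        ext x; simp only [Finset.mem_Ico, Finset.mem_insert]; omega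
      have hnotmem : m ∉ Finset.Ico (m + 1) n := by simp
      by_cases hE : ∀ j, m < j → j ≤ n → S m ≤ S j
      · have h1 : S m ≤ (Finset.Icc m n).inf' h S := by
          apply Finset.le_inf'
          intro j hj
          simp only [Finset.mem_Icc] at hj
          rcases Nat.eq_or_lt_of_le hj.1 with rfl | hlt
          · exact le_refl _
          · exact hE j hlt hj.2
        have hcard : ((Finset.Ico m n).filter
            (fun k => ∀ j, k < j → j ≤ n → S k ≤ S j)).card
            = ((Finset.Ico (m + 1) n).filter
              (fun k => ∀ j, k < j → j ≤ n → S k ≤ S j)).card + 1 := by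
          rw [hico, Finset.filter_insert, if_pos hE,
            Finset.card_insert_of_notMem
              (fun hx => hnotmem (Finset.mem_of_mem_filter _ hx))]
        rw [hcard]
        have hb := hstep m hmlt
        push_cast
        linarith
      · have hcard : ((Finset.Ico m n).filter
            (fun k => ∀ j, k < j → j ≤ n → S k ≤ S j)).card
            = ((Finset.Ico (m + 1) n).filter
              (fun k => ∀ j, k < j → j ≤ n → S k ≤ S j)).card := by
          rw [hico, Finset.filter_insert, if_neg hE]
        push_neg at hE
        obtain ⟨j, hj1, hj2, hj3⟩ := hE
        have h1 : (Finset.Icc (m + 1) n).inf' hne S ≤ (Finset.Icc m n).inf' h S := by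
          apply Finset.le_inf'
          intro x hx
          simp only [Finset.mem_Icc] at hx
          rcases Nat.eq_or_lt_of_le hx.1 with heq | hlt
          · rw [← heq]
            calc (Finset.Icc (m + 1) n).inf' hne S ≤ S j :=
                  Finset.inf'_le S (by simp [Finset.mem_Icc]; omega)
              _ ≤ S m := le_of_lt hj3
          · exact Finset.inf'_le S (by simp [Finset.mem_Icc]; omega)
        rw [hcard]
        linarith
  have h0 : (Finset.Icc (n - n) n).Nonempty := Finset.nonempty_Icc.mpr (by omega)
  have hkey := key n (le_refl n) h0
  have hτ0 : (Finset.Icc (n - n) n).inf' h0 S ≤ S 0 :=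
    Finset.inf'_le S (by simp)
  rw [show Finset.Ico (n - n) n = Finset.range n from by
    rw [Nat.sub_self]; exact Nat.Ico_zero_eq_range n] at hkey
  linarith

/-- **Pliss Lemma.** Given `0 < γ₁ < γ₀` and `a > 1`, there exist
`N₀ ∈ ℕ` and `δ₀ > 0` such that for every finite sequence `(a_l)_{l=0}^{n−1}` with
`n > N₀`, `a⁻¹ < a_l < a` and `∏_{l<n} a_l ≥ γ₀ⁿ`, the set of hyperbolic times
`Ht = {0 ≤ k < n : ∀ k < s < n, ∏_{l=k+1}^{s} a_l ≥ γ₁^{s−k}}` has cardinality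
at least `n·δ₀`. -/
theorem pliss_lemma (γ₀ γ₁ a : ℝ) (h₁ : 0 < γ₁) (h₂ : γ₁ < γ₀) (ha : 1 < a) :
    ∃ (N₀ : ℕ) (δ₀ : ℝ), 0 < δ₀ ∧
      ∀ (n : ℕ) (aseq : ℕ → ℝ), N₀ < n →
        (∀ l < n, a⁻¹ < aseq l ∧ aseq l < a) →
        (∏ l ∈ Finset.range n, aseq l) ≥ γ₀ ^ n →
        ((Finset.range n).filter (fun k =>
            ∀ s, k < s → s < n →
              (∏ l ∈ Finset.Icc (k + 1) s, aseq l) ≥ γ₁ ^ (s - k))).card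
          ≥ (n : ℝ) * δ₀ := by
  have hγ₀ : 0 < γ₀ := h₁.trans h₂
  set c : ℝ := Real.log γ₀ - Real.log γ₁ with hcdef
  have hc : 0 < c := sub_pos.mpr (Real.log_lt_log h₁ h₂)
  set A : ℝ := max (Real.log a - Real.log γ₁) 1 with hAdef
  have hA : (0 : ℝ) < A := lt_of_lt_of_le one_pos (le_max_right _ _)
  refine ⟨⌈2 * A / c⌉₊, c / (2 * A), by positivity, ?_⟩
  intro n aseq hn hbound hprod
  have hapos : (0 : ℝ) < a⁻¹ := inv_pos.mpr (lt_trans one_pos ha)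
  have hpos : ∀ l < n, 0 < aseq l := fun l hl => lt_trans hapos (hbound l hl).1
  set S : ℕ → ℝ := fun j => ∑ l ∈ Finset.range j, (Real.log (aseq l) - Real.log γ₁)
    with hSdef
  have hstep : ∀ m < n, S (m + 1) - S m ≤ A := by
    intro m hm
    have h1 : S (m + 1) - S m = Real.log (aseq m) - Real.log γ₁ := by
      simp only [hSdef, Finset.sum_range_succ]
      ring
    have h2 : Real.log (aseq m) ≤ Real.log a :=
      Real.log_le_log (hpos m hm) (le_of_lt (hbound m hm).2)
    have h3 : Real.log a - Real.log γ₁ ≤ A := le_max_left _ _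
    linarith
  -- lower bound on S n
  have hSn : c * n ≤ S n := by
    have hprodpos : 0 < ∏ l ∈ Finset.range n, aseq l :=
      Finset.prod_pos (fun l hl => hpos l (Finset.mem_range.mp hl))
    have hlog : Real.log (γ₀ ^ n) ≤ Real.log (∏ l ∈ Finset.range n, aseq l) :=
      Real.log_le_log (pow_pos hγ₀ n) hprod
    rw [Real.log_pow,
      Real.log_prod (fun l hl => ne_of_gt (hpos l (Finset.mem_range.mp hl)))] at hlog
    have hSe : S n = (∑ l ∈ Finset.range n, Real.log (aseq l)) - n * Real.log γ₁ := by
      simp [hSdef, Finset.sum_sub_distrib]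
    rw [hSe, hcdef]
    push_cast at hlog ⊢
    nlinarith
  have hcount := pliss_count n S A hstep
  have hS0 : S 0 = 0 := by simp [hSdef]
  set E := (Finset.range n).filter (fun k => ∀ j, k < j → j ≤ n → S k ≤ S j) with hEdef
  set Ht := (Finset.range n).filter (fun k =>
      ∀ s, k < s → s < n →
        (∏ l ∈ Finset.Icc (k + 1) s, aseq l) ≥ γ₁ ^ (s - k)) with hHtdef
  -- each nonzero element m of E gives hyperbolic time m - 1
  have hsub : ∀ m ∈ E, m ≠ 0 → m - 1 ∈ Ht := by
    intro m hm hm0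
    rw [hEdef, Finset.mem_filter, Finset.mem_range] at hm
    obtain ⟨hmn, hmE⟩ := hm
    rw [hHtdef, Finset.mem_filter, Finset.mem_range]
    refine ⟨by omega, ?_⟩
    intro s hks hsn
    have hms : m ≤ s := by omega
    have hj := hmE (s + 1) (by omega) (by omega)
    -- S (s+1) - S m = ∑ over Icc m s
    have hsum : ∑ l ∈ Finset.Icc m s, (Real.log (aseq l) - Real.log γ₁)
        = S (s + 1) - S m := by
      rw [← Finset.Ico_add_one_right_eq_Icc, Finset.sum_Ico_eq_sub _ (by omega : m ≤ s + 1)]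
    have hsum2 : ∑ l ∈ Finset.Icc m s, (Real.log (aseq l) - Real.log γ₁)
        = (∑ l ∈ Finset.Icc m s, Real.log (aseq l))
          - (s + 1 - m : ℕ) * Real.log γ₁ := by
      rw [Finset.sum_sub_distrib, Finset.sum_const, Nat.card_Icc]
      push_cast
      ring
    have hposI : ∀ l ∈ Finset.Icc m s, 0 < aseq l := by
      intro l hl
      rw [Finset.mem_Icc] at hl
      exact hpos l (by omega)
    have hprodposI : 0 < ∏ l ∈ Finset.Icc m s, aseq l := Finset.prod_pos hposI
    have hlogprod : Real.log (∏ l ∈ Finset.Icc m s, aseq l)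
        = ∑ l ∈ Finset.Icc m s, Real.log (aseq l) :=
      Real.log_prod (fun l hl => ne_of_gt (hposI l hl))
    have hm1s : m - 1 + 1 = m := by omega
    rw [hm1s]
    have hcardeq : (s - (m - 1)) = (s + 1 - m : ℕ) := by omega
    rw [hcardeq, ge_iff_le,
      ← Real.log_le_log_iff (pow_pos h₁ _) hprodposI, Real.log_pow, hlogprod]
    push_cast
    nlinarith [hj, hsum, hsum2]
  -- card estimate : E.card ≤ Ht.card + 1
  have hEcard : E.card ≤ Ht.card + 1 := by
    have h5 : (E.erase 0).card ≤ Ht.card := by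
      apply Finset.card_le_card_of_injOn (fun m => m - 1)
      · intro m hm
        exact hsub m (Finset.mem_of_mem_erase hm) (Finset.ne_of_mem_erase hm)
      · intro x hx y hy hxy
        have hx0 : x ≠ 0 := Finset.ne_of_mem_erase hx
        have hy0 : y ≠ 0 := Finset.ne_of_mem_erase hy
        have h' : x - 1 = y - 1 := hxy
        omega
    have h6 : E.card ≤ (E.erase 0).card + 1 := by
      calc E.card ≤ (insert 0 (E.erase 0)).card :=
            Finset.card_le_card (Finset.subset_insert_iff.mpr le_rfl)
        _ ≤ (E.erase 0).card + 1 := Finset.card_insert_le _ _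
    omega
  -- final arithmetic
  have hceil : 2 * A / c < (n : ℝ) := by
    calc 2 * A / c ≤ (⌈2 * A / c⌉₊ : ℝ) := Nat.le_ceil _
      _ < n := by exact_mod_cast hn
  have h2Acn : 2 * A ≤ c * n := by
    rw [div_lt_iff₀ hc] at hceil
    nlinarith
  have hcn : c * n ≤ A * E.card := by
    rw [hS0, sub_zero] at hcount
    exact le_trans hSn hcount
  have hHtR : (E.card : ℝ) ≤ (Ht.card : ℝ) + 1 := by exact_mod_cast hEcard
  have hAE : A * (E.card : ℝ) ≤ A * ((Ht.card : ℝ) + 1) :=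
    mul_le_mul_of_nonneg_left hHtR (le_of_lt hA)
  rw [ge_iff_le, mul_comm, div_mul_eq_mul_div, div_le_iff₀ (by positivity)]
  nlinarith
end

section
/- Let (a_n)_{n∈ℤ} be a real sequence, and suppose there exist integers n₀ ≤ 0 ≤ n₁ and reals δ₊ ≤ δ₋ < 0 such that (a) a_n − a_{n₀} ≥ (n−n₀)δ₋ for all n ≤ n₀, and (b) a_n − a_{n₁} ≥ (n−n₁)δ₊ for all n ≥ n₁. Then there exists an integer N ∈ [n₀, n₁] such that a_{N+n} − a_N ≥ n·δ₊ for all n ≥ 0 and a_{N−n} − a_N ≥ −n·δ₋ for all n ≥ 0. -/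
/-- Let `(a_n)_{n∈ℤ}` be a real sequence, `n₀ ≤ 0 ≤ n₁` integers and
`δ₊ ≤ δ₋ < 0` reals, with `a_n − a_{n₀} ≥ (n−n₀)δ₋` for all `n ≤ n₀` and
`a_n − a_{n₁} ≥ (n−n₁)δ₊` for all `n ≥ n₁`.  Then there is an integer `N ∈ [n₀,n₁]`
with `a_{N+n} − a_N ≥ n·δ₊` and `a_{N−n} − a_N ≥ −n·δ₋` for all `n ≥ 0`. -/
theorem sublemma_sequence (a : ℤ → ℝ) (n₀ n₁ : ℤ) (hn₀ : n₀ ≤ 0) (hn₁ : 0 ≤ n₁)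
    (δp δm : ℝ) (hδ : δp ≤ δm) (hδm : δm < 0)
    (ha : ∀ n : ℤ, n ≤ n₀ → a n - a n₀ ≥ ((n - n₀ : ℤ) : ℝ) * δm)
    (hb : ∀ n : ℤ, n₁ ≤ n → a n - a n₁ ≥ ((n - n₁ : ℤ) : ℝ) * δp) :
    ∃ N : ℤ, n₀ ≤ N ∧ N ≤ n₁ ∧
      (∀ n : ℕ, a (N + n) - a N ≥ (n : ℝ) * δp) ∧
      (∀ n : ℕ, a (N - n) - a N ≥ -(n : ℝ) * δm) := by
  obtain ⟨N, hNmem, hmin⟩ := Finset.exists_min_image (Finset.Icc n₀ n₁)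
    (fun n => a n - (n : ℝ) * δm) ⟨0, Finset.mem_Icc.mpr ⟨hn₀, hn₁⟩⟩
  obtain ⟨hN0, hN1⟩ := Finset.mem_Icc.mp hNmem
  -- backward claim
  have claim1 : ∀ m : ℤ, m ≤ N → a m - a N ≥ ((m - N : ℤ) : ℝ) * δm := by
    intro m hm
    by_cases h : n₀ ≤ m
    · have h1 := hmin m (Finset.mem_Icc.mpr ⟨h, hm.trans hN1⟩)
      push_cast
      linarith
    · have h1 := ha m (le_of_lt (not_le.mp h))
      have h2 := hmin n₀ (Finset.mem_Icc.mpr ⟨le_refl n₀, hn₀.trans hn₁⟩)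
      push_cast at h1 ⊢
      linarith
  have claim2 : ∀ m : ℤ, N ≤ m → a m - a N ≥ ((m - N : ℤ) : ℝ) * δp := by
    intro m hm
    have hmN : (0 : ℝ) ≤ ((m : ℝ) - N) := by
      have : (N : ℝ) ≤ m := by exact_mod_cast hm
      linarith
    by_cases h : m ≤ n₁
    · have h1 := hmin m (Finset.mem_Icc.mpr ⟨hN0.trans hm, h⟩)
      push_cast
      nlinarith
    · have h1 := hb m (le_of_lt (not_le.mp h))
      have h2 := hmin n₁ (Finset.mem_Icc.mpr ⟨hn₀.trans hn₁, le_refl n₁⟩)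
      have hn₁N : (0 : ℝ) ≤ ((n₁ : ℝ) - N) := by
        have : (N : ℝ) ≤ n₁ := by exact_mod_cast hN1
        linarith
      push_cast at h1 ⊢
      nlinarith
  refine ⟨N, hN0, hN1, ?_, ?_⟩
  · intro n
    have := claim2 (N + n) (by omega)
    push_cast at this ⊢
    linarith
  · intro n
    have := claim1 (N - n) (by omega)
    push_cast at this ⊢
    linarith
end

section
/- Let X be a compact metric space, f : X → X a homeomorphism, and g : ℤ × Ξ → ℝ₊ a multiplicative cocycle over a projective cocycle M (so g(n+m,ξ) = g(n, Mⁿξ)·g(m,ξ)). Suppose ξ is a direction at x with g(±n, M^{n_±}ξ) ≥ β_±^{±n} for all n ≥ 0, where 0 < β₊ ≤ β₋ < 1 and n₋ ≤ 0 ≤ n₁ = n₊. Then there exists an integer N with n₋ ≤ N ≤ n₊ such that g(±n, M^{N}ξ) ≥ β_±^{±n} for all n ≥ 0. -/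
/-- Let `g` be a positive multiplicative cocycle over the (iterates of
the) projective cocycle `M`, i.e. `g(n+m,ξ) = g(n, Mᵐξ)·g(m,ξ)`.  If `ξ` is a direction
with `g(n, M^{n₊}ξ) ≥ β₊ⁿ` and `g(−n, M^{n₋}ξ) ≥ β₋⁻ⁿ` for all `n ≥ 0`, where
`0 < β₊ ≤ β₋ < 1` and `n₋ ≤ 0 ≤ n₊`, then there is an integer `N ∈ [n₋, n₊]` such
that `g(n, M^Nξ) ≥ β₊ⁿ` and `g(−n, M^Nξ) ≥ β₋⁻ⁿ` for all `n ≥ 0`. -/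
theorem critical_at_times_gives_critical {Ξ : Type*}
    (Mpow : ℤ → Ξ → Ξ) (g : ℤ → Ξ → ℝ)
    (hMadd : ∀ (n m : ℤ) (ξ : Ξ), Mpow (n + m) ξ = Mpow n (Mpow m ξ))
    (hcoc : ∀ (n m : ℤ) (ξ : Ξ), g (n + m) ξ = g n (Mpow m ξ) * g m ξ)
    (hpos : ∀ (n : ℤ) (ξ : Ξ), 0 < g n ξ)
    (βm βp : ℝ) (h0 : 0 < βp) (h1 : βp ≤ βm) (h2 : βm < 1)
    (nm np : ℤ) (hnm : nm ≤ 0) (hnp : 0 ≤ np) (ξ : Ξ)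
    (hfut : ∀ n : ℕ, g (n : ℤ) (Mpow np ξ) ≥ βp ^ n)
    (hpast : ∀ n : ℕ, g (-(n : ℤ)) (Mpow nm ξ) ≥ βm ^ (-(n : ℤ))) :
    ∃ N : ℤ, nm ≤ N ∧ N ≤ np ∧
      (∀ n : ℕ, g (n : ℤ) (Mpow N ξ) ≥ βp ^ n) ∧
      (∀ n : ℕ, g (-(n : ℤ)) (Mpow N ξ) ≥ βm ^ (-(n : ℤ))) := by
  have hβm : (0:ℝ) < βm := lt_of_lt_of_le h0 h1
  have hGpos : ∀ k : ℤ, 0 < g k ξ := fun k => hpos k ξ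
  have key : ∀ N n : ℤ, g n (Mpow N ξ) = g (n + N) ξ / g N ξ := by
    intro N n
    rw [eq_div_iff (hGpos N).ne']
    exact (hcoc n N ξ).symm
  have hmono : ∀ m : ℤ, m ≤ 0 → βm ^ m ≤ βp ^ m := by
    intro m hm
    have h2' : (0:ℤ) ≤ -m := by omega
    obtain ⟨k, hk⟩ := Int.eq_ofNat_of_zero_le h2'
    have h1' : βp ^ (-m) ≤ βm ^ (-m) := by
      rw [hk, zpow_natCast, zpow_natCast]
      exact pow_le_pow_left₀ h0.le h1 k
    calc βm ^ m = (βm ^ (-m))⁻¹ := by rw [← zpow_neg, neg_neg]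
      _ ≤ (βp ^ (-m))⁻¹ := inv_anti₀ (zpow_pos h0 _) h1'
      _ = βp ^ m := by rw [← zpow_neg, neg_neg]
  have hfut' : ∀ k : ℤ, 0 ≤ k → βp ^ k * g np ξ ≤ g (k + np) ξ := by
    intro k hk
    obtain ⟨n, rfl⟩ := Int.eq_ofNat_of_zero_le hk
    have h := hfut n
    rw [key np n] at h
    rw [zpow_natCast]
    exact (le_div_iff₀ (hGpos np)).mp h
  have hpast' : ∀ k : ℤ, 0 ≤ k → βm ^ (-k) * g nm ξ ≤ g (nm - k) ξ := by
    intro k hk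
    obtain ⟨n, rfl⟩ := Int.eq_ofNat_of_zero_le hk
    have h := hpast n
    rw [key nm (-(n:ℤ))] at h
    rw [show nm - (n:ℤ) = -(n:ℤ) + nm by ring]
    exact (le_div_iff₀ (hGpos nm)).mp h
  obtain ⟨N, hNmem, hNmin⟩ := Finset.exists_min_image (Finset.Icc nm np)
    (fun k => g k ξ * βp ^ (-k)) ⟨0, Finset.mem_Icc.mpr ⟨hnm, hnp⟩⟩
  obtain ⟨hN1, hN2⟩ := Finset.mem_Icc.mp hNmem
  have hmin : ∀ k, nm ≤ k → k ≤ np → βp ^ (k - N) * g N ξ ≤ g k ξ := by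
    intro k hk1 hk2
    have h := hNmin k (Finset.mem_Icc.mpr ⟨hk1, hk2⟩)
    have h' := mul_le_mul_of_nonneg_right h (zpow_pos h0 k).le
    calc βp ^ (k - N) * g N ξ = g N ξ * βp ^ (-N) * βp ^ k := by
          rw [mul_assoc, ← zpow_add₀ h0.ne', show -N + k = k - N by ring]; ring
      _ ≤ g k ξ * βp ^ (-k) * βp ^ k := h'
      _ = g k ξ := by
          rw [mul_assoc, ← zpow_add₀ h0.ne', neg_add_cancel, zpow_zero, mul_one]
  refine ⟨N, hN1, hN2, ?_, ?_⟩
  · intro n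
    rw [key, ge_iff_le, le_div_iff₀ (hGpos N), ← zpow_natCast βp n]
    by_cases hc : (n:ℤ) + N ≤ np
    · have h := hmin ((n:ℤ) + N) (by omega) hc
      rw [show (n:ℤ) + N - N = (n:ℤ) by ring] at h
      exact h
    · push_neg at hc
      have h1' := hfut' ((n:ℤ) + N - np) (by omega)
      have h2' := hmin np (le_trans hnm hnp) le_rfl
      rw [show (n:ℤ) + N - np + np = (n:ℤ) + N by ring] at h1'
      calc βp ^ (n:ℤ) * g N ξ
          = βp ^ ((n:ℤ) + N - np) * (βp ^ (np - N) * g N ξ) := by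
            rw [← mul_assoc, ← zpow_add₀ h0.ne',
              show (n:ℤ) + N - np + (np - N) = (n:ℤ) by ring]
        _ ≤ βp ^ ((n:ℤ) + N - np) * g np ξ :=
            mul_le_mul_of_nonneg_left h2' (zpow_pos h0 _).le
        _ ≤ g ((n:ℤ) + N) ξ := h1'
  · intro n
    rw [key, ge_iff_le, le_div_iff₀ (hGpos N)]
    by_cases hc : nm ≤ -(n:ℤ) + N
    · have h := hmin (-(n:ℤ) + N) hc (by omega)
      rw [show -(n:ℤ) + N - N = -(n:ℤ) by ring] at h
      have hmm : βm ^ (-(n:ℤ)) ≤ βp ^ (-(n:ℤ)) := hmono _ (by omega)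
      calc βm ^ (-(n:ℤ)) * g N ξ ≤ βp ^ (-(n:ℤ)) * g N ξ :=
            mul_le_mul_of_nonneg_right hmm (hGpos N).le
        _ ≤ g (-(n:ℤ) + N) ξ := h
    · push_neg at hc
      have h1' := hpast' (nm - (-(n:ℤ) + N)) (by omega)
      rw [show nm - (nm - (-(n:ℤ) + N)) = -(n:ℤ) + N by ring] at h1'
      have h2' := hmin nm le_rfl (le_trans hnm hnp)
      have hmm : βm ^ (nm - N) ≤ βp ^ (nm - N) := hmono _ (by omega)
      have h3' : βm ^ (nm - N) * g N ξ ≤ g nm ξ :=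
        le_trans (mul_le_mul_of_nonneg_right hmm (hGpos N).le) h2'
      calc βm ^ (-(n:ℤ)) * g N ξ
          = βm ^ (-(nm - (-(n:ℤ) + N))) * (βm ^ (nm - N) * g N ξ) := by
            rw [← mul_assoc, ← zpow_add₀ hβm.ne',
              show -(nm - (-(n:ℤ) + N)) + (nm - N) = -(n:ℤ) by ring]
        _ ≤ βm ^ (-(nm - (-(n:ℤ) + N))) * g nm ξ :=
            mul_le_mul_of_nonneg_left h3' (zpow_pos hβm _).le
        _ ≤ g (-(n:ℤ) + N) ξ := h1'
end
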